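/- arXiv:1912.07912 — 2 statements merged into one kernel-verified Lean document; each statement's English description precedes it below -/
import Mathlib

section
/- Let K be a field of characteristic 0 with derivation δ and let P ∈ K[X_0,…,X_m] with separant s_P = ∂P/∂X_m. There exists a sequence of rational functions f_i (i ≥ 1) in the variables X_0,…,X_m, each of the form Q_i / s_P^{ℓ_i} for some polynomial Q_i over the differential subfield generated by the coefficients of P and some ℓ_i ∈ ℕ, such that for every a ∈ K with P(δ̄^m(a)) = 0 and s_P(δ̄^m(a)) ≠ 0, one has δ^{m+i}(a) = f_i(δ̄^m(a)) for all i ≥ 1. -/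
open MvPolynomial

namespace RatProl

variable {K : Type*} [CommRing K] {σ : Type*}

/-- Apply `δ` to every coefficient. -/
noncomputable def mapC (δ : K → K) (h0 : δ 0 = 0) (R : MvPolynomial σ K) :
    MvPolynomial σ K := AddMonoidAlgebra.ofCoeff (Finsupp.mapRange δ h0 (AddMonoidAlgebra.coeff R))

lemma coeff_mapC (δ : K → K) (h0 : δ 0 = 0) (R : MvPolynomial σ K) (d : σ →₀ ℕ) :
    coeff d (mapC δ h0 R) = δ (coeff d R) := rfl

lemma mapC_add (δ : K → K) (h0 : δ 0 = 0) (hadd : ∀ a b : K, δ (a + b) = δ a + δ b)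
    (p q : MvPolynomial σ K) : mapC δ h0 (p + q) = mapC δ h0 p + mapC δ h0 q := by
  ext d; simp [coeff_mapC, hadd]

lemma mapC_C (δ : K → K) (h0 : δ 0 = 0) (c : K) :
    mapC δ h0 (C c : MvPolynomial σ K) = C (δ c) := by
  classical
  ext d; simp [coeff_mapC, coeff_C, apply_ite δ, h0]

lemma mapC_mul_X (δ : K → K) (h0 : δ 0 = 0) (p : MvPolynomial σ K) (n : σ) :
    mapC δ h0 (p * X n) = mapC δ h0 p * X n := by
  classical
  ext d
  rw [coeff_mapC, coeff_mul_X', coeff_mul_X', apply_ite δ, h0, coeff_mapC]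

/-- Chain rule for evaluating a polynomial at a point whose coordinates are differentiated. -/
lemma deriv_eval (δ : K → K) (h0 : δ 0 = 0) (hadd : ∀ a b : K, δ (a + b) = δ a + δ b)
    (hleib : ∀ a b : K, δ (a * b) = δ a * b + a * δ b)
    [Fintype σ] [DecidableEq σ] (v dv : σ → K) (hv : ∀ j, δ (v j) = dv j)
    (R : MvPolynomial σ K) :
    δ (eval v R) = eval v (mapC δ h0 R) + ∑ j, eval v (pderiv j R) * dv j := by
  induction R using MvPolynomial.induction_on with
  | C c => simp [mapC_C δ h0, pderiv_C]
  | add p q hp hq =>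
      rw [map_add, hadd, hp, hq, mapC_add δ h0 hadd, map_add]
      simp only [map_add, add_mul, Finset.sum_add_distrib]
      ring
  | mul_X p n hp =>
      have h1 : δ (eval v (p * X n)) = δ (eval v p) * v n + eval v p * dv n := by
        rw [map_mul, eval_X, hleib, hv]
      rw [h1, hp, mapC_mul_X δ h0, map_mul, eval_X]
      simp only [pderiv_mul, pderiv_X, map_add, map_mul, eval_X, Pi.single_apply,
        apply_ite (eval v), map_one, map_zero, add_mul, mul_ite, mul_one, mul_zero, ite_mul,
        zero_mul]
      rw [Finset.sum_add_distrib, Finset.sum_ite_eq Finset.univ n (fun j => eval v p * dv j)]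
      simp only [Finset.mem_univ, if_true, Finset.sum_mul]
      have hsum : ∑ i : σ, eval v (pderiv i p) * dv i * v n
          = ∑ x : σ, eval v (pderiv x p) * v n * dv x :=
        Finset.sum_congr rfl (fun x _ => by ring)
      rw [hsum]
      ring

lemma deriv_pow (δ : K → K) (hleib : ∀ a b : K, δ (a * b) = δ a * b + a * δ b)
    (x : K) : ∀ n : ℕ, δ (x ^ (n + 1)) = ((n + 1 : ℕ) : K) * x ^ n * δ x := by
  intro n
  induction n with
  | zero => simp [pow_one]
  | succ k ih =>
      have : x ^ (k + 2) = x * x ^ (k + 1) := by ring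
      rw [this, hleib, ih]
      push_cast
      ring

end RatProl

open RatProl

/-- Rational prolongation along `P`: there are rational functions `f_i = Q_i / s_P^{ℓ_i}`,
with `Q_i` a polynomial whose coefficients lie in every subfield containing the
coefficients of `P` and closed under `δ`, such that whenever `P(δ̄^m a) = 0` and
`s_P(δ̄^m a) ≠ 0`, one has `δ^{m+i} a = f_i(δ̄^m a)` for all `i ≥ 1`. -/
theorem rational_prolongation {K : Type*} [Field K] [CharZero K] (δ : K → K)
    (hadd : ∀ a b : K, δ (a + b) = δ a + δ b)
    (hleib : ∀ a b : K, δ (a * b) = δ a * b + a * δ b)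
    (m : ℕ) (P : MvPolynomial (Fin (m + 1)) K) :
    ∃ (Q : ℕ → MvPolynomial (Fin (m + 1)) K) (ℓ : ℕ → ℕ),
      (∀ (F : Subfield K), (∀ d, MvPolynomial.coeff d P ∈ F) → (∀ x ∈ F, δ x ∈ F) →
        ∀ i d, MvPolynomial.coeff d (Q i) ∈ F) ∧
      ∀ a : K,
        MvPolynomial.eval (fun j : Fin (m + 1) => δ^[(j : ℕ)] a) P = 0 →
        MvPolynomial.eval (fun j : Fin (m + 1) => δ^[(j : ℕ)] a)
            (MvPolynomial.pderiv (Fin.last m) P) ≠ 0 →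
        ∀ i : ℕ, 1 ≤ i →
          δ^[m + i] a =
            MvPolynomial.eval (fun j : Fin (m + 1) => δ^[(j : ℕ)] a) (Q i) /
              (MvPolynomial.eval (fun j : Fin (m + 1) => δ^[(j : ℕ)] a)
                  (MvPolynomial.pderiv (Fin.last m) P)) ^ (ℓ i) := by
  classical
  have h0 : δ 0 = 0 := by
    have h := hadd 0 0
    rw [add_zero] at h
    exact (add_eq_left.mp h.symm)
  set s : MvPolynomial (Fin (m + 1)) K := pderiv (Fin.last m) P with hs
  -- auxiliary operators
  set N : MvPolynomial (Fin (m + 1)) K → MvPolynomial (Fin (m + 1)) K :=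
    fun R => mapC δ h0 R + ∑ j : Fin m, pderiv j.castSucc R * X j.succ with hN
  set Q1 : MvPolynomial (Fin (m + 1)) K := -(N P) with hQ1
  set D : MvPolynomial (Fin (m + 1)) K → MvPolynomial (Fin (m + 1)) K :=
    fun R => s * N R + pderiv (Fin.last m) R * Q1 with hD
  set q : ℕ → MvPolynomial (Fin (m + 1)) K :=
    fun k => Nat.rec Q1 (fun k qk => s * D qk - (2 * k + 1) • (qk * D s)) k with hq
  refine ⟨fun i => q (i - 1), fun i => 2 * i - 1, ?_, ?_⟩
  · -- coefficient membership
    intro F hPF hδF i d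
    -- closure predicate
    set Mem : MvPolynomial (Fin (m + 1)) K → Prop := fun R => ∀ e, coeff e R ∈ F with hMem
    have memAdd : ∀ {p q}, Mem p → Mem q → Mem (p + q) := by
      intro p q hp hq e; rw [coeff_add]; exact add_mem (hp e) (hq e)
    have memNeg : ∀ {p}, Mem p → Mem (-p) := by
      intro p hp e; rw [coeff_neg]; exact neg_mem (hp e)
    have memMul : ∀ {p q}, Mem p → Mem q → Mem (p * q) := by
      intro p q hp hq e
      rw [coeff_mul]
      exact sum_mem fun c _ => mul_mem (hp c.1) (hq c.2)
    have memSum : ∀ {α : Type} (t : Finset α) (f : α → MvPolynomial (Fin (m + 1)) K),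
        (∀ x ∈ t, Mem (f x)) → Mem (∑ x ∈ t, f x) := by
      intro α t f hf e
      rw [MvPolynomial.coeff_sum]
      exact sum_mem fun x hx => hf x hx e
    have memX : ∀ n, Mem (X n) := by
      intro n e
      rw [coeff_X']
      split_ifs
      · exact one_mem F
      · exact zero_mem F
    have memMapC : ∀ {p}, Mem p → Mem (mapC δ h0 p) := by
      intro p hp e
      rw [coeff_mapC]
      exact hδF _ (hp e)
    have memMono : ∀ (d : Fin (m + 1) →₀ ℕ) (c : K), c ∈ F → Mem (monomial d c) := by
      intro d c hc e
      rw [coeff_monomial]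
      split_ifs
      · exact hc
      · exact zero_mem F
    have memNsmul : ∀ (n : ℕ) {p}, Mem p → Mem (n • p) := by
      intro n p hp e
      rw [coeff_smul]
      exact nsmul_mem (hp e) n
    have memSub : ∀ {p q}, Mem p → Mem q → Mem (p - q) := by
      intro p q hp hq
      rw [sub_eq_add_neg]
      exact memAdd hp (memNeg hq)
    have memPd : ∀ (j : Fin (m + 1)) {p}, Mem p → Mem (pderiv j p) := by
      intro j p hp
      have hrw : pderiv j p
          = ∑ d ∈ p.support, monomial (d - Finsupp.single j 1) (coeff d p * (d j : K)) := by
        conv_lhs => rw [p.as_sum]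
        rw [map_sum]
        simp [pderiv_monomial]
      rw [hrw]
      exact memSum _ _ fun d _ => memMono _ _ (mul_mem (hp d) (natCast_mem F (d j)))
    have memN : ∀ {p}, Mem p → Mem (N p) := by
      intro p hp
      rw [hN]
      exact memAdd (memMapC hp) (memSum _ _ fun j _ => memMul (memPd _ hp) (memX _))
    have memS : Mem s := memPd _ hPF
    have memQ1 : Mem Q1 := by rw [hQ1]; exact memNeg (memN hPF)
    have memD : ∀ {p}, Mem p → Mem (D p) := by
      intro p hp
      rw [hD]
      exact memAdd (memMul memS (memN hp)) (memMul (memPd _ hp) memQ1)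
    have memq : ∀ k, Mem (q k) := by
      intro k
      induction k with
      | zero => exact memQ1
      | succ k ih =>
          have : q (k + 1) = s * D (q k) - (2 * k + 1) • (q k * D s) := rfl
          rw [this]
          exact memSub (memMul memS (memD ih)) (memNsmul _ (memMul ih (memD memS)))
    exact memq (i - 1) d
  · -- the analytic statement
    intro a hP hsne i hi
    set v : Fin (m + 1) → K := fun j => δ^[(j : ℕ)] a with hv
    set e : K := eval v s with he
    have hvd : ∀ j : Fin (m + 1), δ (v j) = δ^[(j : ℕ) + 1] a := fun j =>
      (Function.iterate_succ_apply' δ (j : ℕ) a).symm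
    have chain : ∀ R : MvPolynomial (Fin (m + 1)) K,
        δ (eval v R) = eval v (N R) + eval v (pderiv (Fin.last m) R) * δ^[m + 1] a := by
      intro R
      have h := deriv_eval δ h0 hadd hleib v (fun j : Fin (m + 1) => δ^[(j : ℕ) + 1] a) hvd R
      rw [h, Fin.sum_univ_castSucc]
      have h2 : ∀ j : Fin m,
          eval v (pderiv j.castSucc R) * δ^[((j.castSucc : Fin (m + 1)) : ℕ) + 1] a
            = eval v (pderiv j.castSucc R * X j.succ) := by
        intro j
        rw [map_mul, eval_X]
        congr 1
      rw [Finset.sum_congr rfl fun j _ => h2 j]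
      rw [hN]
      simp only [map_add, map_sum, Fin.val_last]
      ring
    have hbase : δ^[m + 1] a = eval v Q1 / e := by
      have h := chain P
      rw [hP, h0] at h
      rw [hQ1, map_neg, eq_div_iff hsne]
      linear_combination -h
    have hDval : ∀ R, eval v (D R)
        = e * eval v (N R) + eval v (pderiv (Fin.last m) R) * eval v Q1 := by
      intro R
      rw [hD]
      simp only [map_add, map_mul, he]
    have key : ∀ R, δ (eval v R) = eval v (D R) / e := by
      intro R
      rw [chain R, hbase, hDval R]
      field_simp
    have main : ∀ k : ℕ, δ^[m + 1 + k] a = eval v (q k) / e ^ (2 * k + 1) := by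
      intro k
      induction k with
      | zero =>
          have h00 : q 0 = Q1 := rfl
          rw [h00]
          simpa using hbase
      | succ k ih =>
          have hx : δ^[m + 1 + (k + 1)] a = δ (δ^[m + 1 + k] a) :=
            Function.iterate_succ_apply' δ (m + 1 + k) a
          set x := δ^[m + 1 + k] a with hxdef
          have hu : eval v (q k) = x * e ^ (2 * k + 1) := by
            rw [ih]
            field_simp
          have h1 : δ (eval v (q k)) = eval v (D (q k)) / e := key _
          have h2 : δ (eval v (q k))
              = δ x * e ^ (2 * k + 1) + x * (((2 * k + 1 : ℕ) : K) * e ^ (2 * k) * δ e) := by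
            rw [hu, hleib, deriv_pow δ hleib e (2 * k)]
          have h3 : δ e = eval v (D s) / e := key s
          have hqs : eval v (q (k + 1))
              = e * eval v (D (q k))
                - ((2 * k + 1 : ℕ) : K) * (eval v (q k) * eval v (D s)) := by
            have hrw : q (k + 1) = s * D (q k) - (2 * k + 1) • (q k * D s) := rfl
            rw [hrw, map_sub, map_mul, map_nsmul, map_mul, ← he, nsmul_eq_mul]
          rw [hx, hqs, hu, eq_div_iff (pow_ne_zero _ hsne)]
          rw [h2, h3] at h1
          field_simp at h1
          push_cast at h1 ⊢
          linear_combination e * h1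
    obtain ⟨k, rfl⟩ : ∃ k, i = k + 1 := ⟨i - 1, (Nat.succ_pred_eq_of_pos hi).symm⟩
    have h := main k
    rw [show m + 1 + k = m + (k + 1) by ring] at h
    rw [show 2 * k + 1 = 2 * (k + 1) - 1 by omega] at h
    simpa using h
end

section
/- Let K ⊆ L be an extension of fields of characteristic 0 and let δ be a derivation on K. Then there exists a derivation δ' on L extending δ (i.e. δ'|_K = δ). -/
open Polynomial

private lemma derivation_extend_step {L : Type*} [Field L] [CharZero L] (M : Subfield L) (x : L)
    (d : L → L)
    (hd0 : ∀ y ∈ M, ∀ z ∈ M, d (y + z) = d y + d z)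
    (hd1 : ∀ y ∈ M, ∀ z ∈ M, d (y * z) = d y * z + y * d z) :
    ∃ d' : L → L, (∀ y ∈ M, d' y = d y) ∧
      (∀ y ∈ Subfield.closure (↑M ∪ {x}), ∀ z ∈ Subfield.closure (↑M ∪ {x}),
        d' (y + z) = d' y + d' z) ∧
      (∀ y ∈ Subfield.closure (↑M ∪ {x}), ∀ z ∈ Subfield.closure (↑M ∪ {x}),
        d' (y * z) = d' y * z + y * d' z) := by
  classical
  have hd_zero : d 0 = 0 := by
    have := hd0 0 M.zero_mem 0 M.zero_mem; simpa using this.symm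
  have hd_one : d 1 = 0 := by
    have := hd1 1 M.one_mem 1 M.one_mem
    simp only [one_mul, mul_one] at this
    linear_combination -this
  set N : Polynomial ↥M → L := fun p => aeval x p with hN
  have hNadd : ∀ p q, N (p + q) = N p + N q := fun p q => map_add (aeval x) p q
  have hNmul : ∀ p q, N (p * q) = N p * N q := fun p q => map_mul (aeval x) p q
  have hNsub : ∀ p q, N (p - q) = N p - N q := fun p q => map_sub (aeval x) p q
  have hNC : ∀ a : ↥M, N (C a) = ↑a := fun a => by simp [hN]; rfl
  have hNone : N 1 = 1 := map_one (aeval x)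
  set E₀ : Polynomial ↥M → L := fun p => p.sum fun i a => d ↑a * x ^ i with hE₀
  have hf0 : ∀ i : ℕ, d ↑(0 : ↥M) * x ^ i = 0 := by
    intro i; rw [ZeroMemClass.coe_zero, hd_zero, zero_mul]
  have hE₀mono : ∀ (n : ℕ) (a : ↥M), E₀ (monomial n a) = d ↑a * x ^ n := by
    intro n a
    simp only [hE₀]
    exact sum_monomial_index _ _ (hf0 n)
  have hE₀add : ∀ p q, E₀ (p + q) = E₀ p + E₀ q := by
    intro p q
    simp only [hE₀]
    refine sum_add_index p q _ hf0 ?_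
    intro i a b
    rw [AddMemClass.coe_add, hd0 _ (SetLike.coe_mem a) _ (SetLike.coe_mem b), add_mul]
  have hE₀zero : E₀ 0 = 0 := by simp [hE₀]
  have hE₀mul : ∀ p q, E₀ (p * q) = E₀ p * N q + N p * E₀ q := by
    intro p q
    induction p using Polynomial.induction_on' with
    | add u v hu hv =>
      rw [add_mul, hE₀add, hu, hv, hE₀add, hNadd]; ring
    | monomial n a =>
      induction q using Polynomial.induction_on' with
      | add u v hu hv =>
        rw [mul_add, hE₀add, hu, hv, hE₀add, hNadd]; ring
      | monomial m b =>
        rw [monomial_mul_monomial, hE₀mono, hE₀mono, hE₀mono, MulMemClass.coe_mul,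
          hd1 _ (SetLike.coe_mem a) _ (SetLike.coe_mem b)]
        simp only [hN, aeval_monomial]
        show _ = _ * ((b:L) * x ^ m) + ((a:L) * x ^ n) * _
        rw [pow_add]; ring
  -- the value of the derivative at x
  set c : L := if h : IsIntegral ↥M x then
      -(E₀ (minpoly ↥M x)) / N (derivative (minpoly ↥M x)) else 0 with hc
  set E : Polynomial ↥M → L := fun p => E₀ p + N (derivative p) * c with hE
  have hEadd : ∀ p q, E (p + q) = E p + E q := by
    intro p q; simp only [hE]; rw [derivative_add, hE₀add, hNadd]; ring
  have hEmul : ∀ p q, E (p * q) = E p * N q + N p * E q := by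
    intro p q; simp only [hE]
    rw [derivative_mul, hE₀mul, hNadd, hNmul, hNmul]; ring
  have hEzero : E 0 = 0 := by simp only [hE]; rw [hE₀zero, derivative_zero]; simp [hN]
  have hEsub : ∀ p q, E (p - q) = E p - E q := by
    intro p q
    have h2 := hEadd (p - q) q
    rw [sub_add_cancel] at h2
    exact eq_sub_iff_add_eq.mpr h2.symm
  have hEC : ∀ a : ↥M, E (C a) = d ↑a := by
    intro a
    simp only [hE]
    rw [derivative_C, ← monomial_zero_left, hE₀mono, pow_zero, mul_one]
    simp [hN]
  -- kernel property
  have hker : ∀ p, N p = 0 → E p = 0 := by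
    intro p hp
    by_cases h : IsIntegral ↥M x
    · obtain ⟨q, rfl⟩ := minpoly.dvd ↥M x hp
      have hNπ : N (minpoly ↥M x) = 0 := minpoly.aeval ↥M x
      have hπ' : N (derivative (minpoly ↥M x)) ≠ 0 := by
        intro h0
        have hne : derivative (minpoly ↥M x) ≠ 0 := by
          have := minpoly.natDegree_pos h
          intro h1
          have := natDegree_eq_zero_of_derivative_eq_zero h1
          omega
        exact ((minpoly.degree_le_of_ne_zero ↥M x hne h0).not_gt
          (degree_derivative_lt (minpoly.ne_zero h)))
      have hEπ : E (minpoly ↥M x) = 0 := by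
        simp only [hE, hc, dif_pos h]
        field_simp
        ring
      rw [hEmul, hEπ, hNπ]; ring
    · have hp0 : p = 0 := by
        by_contra hne
        exact h (IsAlgebraic.isIntegral ⟨p, hne, hp⟩)
      rw [hp0, hEzero]
  -- membership characterization
  have hsr : ∀ a : L, a ∈ Subring.closure (↑M ∪ {x} : Set L) ↔ ∃ r : Polynomial ↥M, N r = a := by
    intro a
    have hrange : Set.range (algebraMap ↥M L) = (M : Set L) := by
      ext b
      constructor
      · rintro ⟨b, rfl⟩; exact b.2
      · intro hb; exact ⟨⟨b, hb⟩, rfl⟩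
    rw [show ((M : Set L) ∪ {x} : Set L) = Set.range (algebraMap ↥M L) ∪ {x} by rw [hrange]]
    rw [← Algebra.adjoin_eq_ring_closure, Subalgebra.mem_toSubring,
      Algebra.adjoin_singleton_eq_range_aeval]
    simp only [hN]
    exact AlgHom.mem_range _
  have hmem : ∀ y, y ∈ Subfield.closure (↑M ∪ {x} : Set L) ↔
      ∃ r s : Polynomial ↥M, N s ≠ 0 ∧ y = N r / N s := by
    intro y
    constructor
    · intro hy
      rw [Subfield.mem_closure_iff] at hy
      obtain ⟨a, ha, b, hb, rfl⟩ := hy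
      obtain ⟨r, rfl⟩ := (hsr a).mp ha
      obtain ⟨s, rfl⟩ := (hsr b).mp hb
      by_cases hs : N s = 0
      · refine ⟨0, 1, by rw [hNone]; exact one_ne_zero, ?_⟩
        rw [hs, div_zero, hNone, div_one]
        exact (map_zero (aeval x)).symm
      · exact ⟨r, s, hs, rfl⟩
    · rintro ⟨r, s, hs, rfl⟩
      rw [Subfield.mem_closure_iff]
      exact ⟨N r, (hsr _).mpr ⟨r, rfl⟩, N s, (hsr _).mpr ⟨s, rfl⟩, rfl⟩
  -- the extended function
  set d' : L → L := fun y =>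
    if h : ∃ rs : Polynomial ↥M × Polynomial ↥M, N rs.2 ≠ 0 ∧ y = N rs.1 / N rs.2 then
      (E h.choose.1 * N h.choose.2 - N h.choose.1 * E h.choose.2) / (N h.choose.2) ^ 2
    else 0 with hd'
  have hwd : ∀ r s r' s' : Polynomial ↥M, N s ≠ 0 → N s' ≠ 0 → N r / N s = N r' / N s' →
      (E r * N s - N r * E s) / (N s) ^ 2 = (E r' * N s' - N r' * E s') / (N s') ^ 2 := by
    intro r s r' s' hs hs' h
    have hA : N r * N s' = N r' * N s := (div_eq_div_iff hs hs').mp h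
    have hB : E r * N s' + N r * E s' = E r' * N s + N r' * E s := by
      have h0 : E (r * s' - r' * s) = 0 := by
        apply hker; rw [hNsub, hNmul, hNmul, hA]; ring
      rw [hEsub, hEmul, hEmul] at h0
      linear_combination h0
    rw [div_eq_div_iff (pow_ne_zero 2 hs) (pow_ne_zero 2 hs')]
    linear_combination (N s * N s') * hB - (E s * N s' + E s' * N s) * hA
  have hspec : ∀ r s : Polynomial ↥M, N s ≠ 0 →
      d' (N r / N s) = (E r * N s - N r * E s) / (N s) ^ 2 := by
    intro r s hs
    have hex : ∃ rs : Polynomial ↥M × Polynomial ↥M, N rs.2 ≠ 0 ∧ N r / N s = N rs.1 / N rs.2 :=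
      ⟨(r, s), hs, rfl⟩
    simp only [hd', dif_pos hex]
    exact hwd _ _ _ _ hex.choose_spec.1 hs hex.choose_spec.2.symm
  refine ⟨d', ?_, ?_, ?_⟩
  · intro y hy
    have h1 : y = N (C ⟨y, hy⟩) / N 1 := by rw [hNC, hNone, div_one]
    rw [h1, hspec _ _ (by rw [hNone]; exact one_ne_zero), hNC, hNone, hEC]
    have hE1 : E 1 = 0 := by
      rw [show (1 : Polynomial ↥M) = C 1 by simp, hEC, OneMemClass.coe_one, hd_one]
    rw [hE1]; simp
  · intro y hy z hz
    obtain ⟨r, s, hs, rfl⟩ := (hmem y).mp hy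
    obtain ⟨r', s', hs', rfl⟩ := (hmem z).mp hz
    have hsum : N r / N s + N r' / N s' = N (r * s' + r' * s) / N (s * s') := by
      rw [hNadd, hNmul, hNmul, hNmul]
      field_simp
    rw [hsum, hspec _ _ (by rw [hNmul]; exact mul_ne_zero hs hs'), hspec _ _ hs, hspec _ _ hs',
      hEadd, hEmul, hEmul, hEmul, hNadd, hNmul, hNmul, hNmul]
    field_simp
    ring
  · intro y hy z hz
    obtain ⟨r, s, hs, rfl⟩ := (hmem y).mp hy
    obtain ⟨r', s', hs', rfl⟩ := (hmem z).mp hz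
    have hprod : N r / N s * (N r' / N s') = N (r * r') / N (s * s') := by
      rw [hNmul, hNmul, div_mul_div_comm]
    rw [hprod, hspec _ _ (by rw [hNmul]; exact mul_ne_zero hs hs'), hspec _ _ hs, hspec _ _ hs',
      hEmul, hEmul, hNmul, hNmul]
    field_simp
    ring

section
variable {K L : Type*} [Field K] [Field L] [Algebra K L]

private structure PartialDer (K L : Type*) [Field K] [Field L] [Algebra K L] (δ : K → K) : Type _ where
  car : Subfield L
  f : L → L
  mem' : ∀ a : K, algebraMap K L a ∈ car
  compat' : ∀ a : K, f (algebraMap K L a) = algebraMap K L (δ a)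
  addp' : ∀ y ∈ car, ∀ z ∈ car, f (y + z) = f y + f z
  mulp' : ∀ y ∈ car, ∀ z ∈ car, f (y * z) = f y * z + y * f z

end

/-- In characteristic 0, every derivation on a field extends to any field extension. -/
theorem derivation_extends {K L : Type*} [Field K] [Field L] [CharZero K] [Algebra K L]
    (δ : K → K)
    (hadd : ∀ a b : K, δ (a + b) = δ a + δ b)
    (hleib : ∀ a b : K, δ (a * b) = δ a * b + a * δ b) :
    ∃ δ' : L → L,
      (∀ x y : L, δ' (x + y) = δ' x + δ' y) ∧
      (∀ x y : L, δ' (x * y) = δ' x * y + x * δ' y) ∧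
      (∀ a : K, δ' (algebraMap K L a) = algebraMap K L (δ a)) := by
  classical
  haveI : CharZero L := charZero_of_injective_algebraMap (algebraMap K L).injective
  set ι := algebraMap K L with hι
  -- the base partial derivation
  set f₀ : L → L := fun y => if h : ∃ a : K, ι a = y then ι (δ h.choose) else 0 with hf₀
  have hf₀spec : ∀ a : K, f₀ (ι a) = ι (δ a) := by
    intro a
    have h : ∃ b : K, ι b = ι a := ⟨a, rfl⟩
    have : h.choose = a := (algebraMap K L).injective h.choose_spec
    simp only [hf₀, dif_pos h, this]
  have base : PartialDer K L δ := by
    refine ⟨ι.fieldRange, f₀, fun a => ⟨a, rfl⟩, hf₀spec, ?_, ?_⟩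
    · rintro y ⟨a, rfl⟩ z ⟨b, rfl⟩
      rw [← map_add, hf₀spec, hf₀spec, hf₀spec, hadd, map_add]
    · rintro y ⟨a, rfl⟩ z ⟨b, rfl⟩
      rw [← map_mul, hf₀spec, hf₀spec, hf₀spec, hleib, map_add, map_mul, map_mul]
  set r : PartialDer K L δ → PartialDer K L δ → Prop :=
    fun p q => p.car ≤ q.car ∧ ∀ y ∈ p.car, p.f y = q.f y with hr
  have htrans : ∀ {a b c : PartialDer K L δ}, r a b → r b c → r a c := by
    rintro a b c ⟨h1, h2⟩ ⟨h3, h4⟩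
    exact ⟨le_trans h1 h3, fun y hy => (h2 y hy).trans (h4 y (h1 hy))⟩
  have hbdd : ∀ c, IsChain r c → ∃ ub, ∀ a ∈ c, r a ub := by
    intro c hc
    rcases Set.eq_empty_or_nonempty c with rfl | ⟨p₀, hp₀⟩
    · exact ⟨base, fun a ha => absurd ha (Set.notMem_empty a)⟩
    have hdir : ∀ p ∈ c, ∀ q ∈ c, ∃ s ∈ c, r p s ∧ r q s := by
      intro p hp q hq
      rcases eq_or_ne p q with rfl | hne
      · exact ⟨p, hp, ⟨le_refl _, fun y _ => rfl⟩, ⟨le_refl _, fun y _ => rfl⟩⟩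
      rcases hc hp hq hne with h | h
      · exact ⟨q, hq, h, ⟨le_refl _, fun y _ => rfl⟩⟩
      · exact ⟨p, hp, ⟨le_refl _, fun y _ => rfl⟩, h⟩
    set carU : Subfield L := sSup (PartialDer.car '' c) with hcarU
    have hmemU : ∀ y : L, y ∈ carU ↔ ∃ p ∈ c, y ∈ p.car := by
      intro y
      have hdirOn : DirectedOn (· ≤ ·) (PartialDer.car '' c) := by
        rintro _ ⟨p, hp, rfl⟩ _ ⟨q, hq, rfl⟩
        obtain ⟨s, hs, hps, hqs⟩ := hdir p hp q hq
        exact ⟨s.car, ⟨s, hs, rfl⟩, hps.1, hqs.1⟩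
      have hne : (PartialDer.car '' c).Nonempty := ⟨p₀.car, ⟨p₀, hp₀, rfl⟩⟩
      rw [hcarU, Subfield.mem_sSup_of_directedOn hne hdirOn]
      constructor
      · rintro ⟨_, ⟨p, hp, rfl⟩, hy⟩; exact ⟨p, hp, hy⟩
      · rintro ⟨p, hp, hy⟩; exact ⟨p.car, ⟨p, hp, rfl⟩, hy⟩
    set fU : L → L := fun y => if h : ∃ p, p ∈ c ∧ y ∈ p.car then h.choose.f y else 0 with hfU
    have hcons : ∀ p ∈ c, ∀ y ∈ p.car, fU y = p.f y := by
      intro p hp y hy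
      have h : ∃ q, q ∈ c ∧ y ∈ q.car := ⟨p, hp, hy⟩
      obtain ⟨s, hs, hps, hqs⟩ := hdir p hp h.choose h.choose_spec.1
      simp only [hfU, dif_pos h]
      rw [hqs.2 y h.choose_spec.2, hps.2 y hy]
    refine ⟨⟨carU, fU, ?_, ?_, ?_, ?_⟩, ?_⟩
    · intro a
      exact (hmemU _).mpr ⟨p₀, hp₀, p₀.mem' a⟩
    · intro a
      rw [hcons p₀ hp₀ _ (p₀.mem' a)]
      exact p₀.compat' a
    · intro y hy z hz
      obtain ⟨p, hp, hy'⟩ := (hmemU y).mp hy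
      obtain ⟨q, hq, hz'⟩ := (hmemU z).mp hz
      obtain ⟨s, hs, hps, hqs⟩ := hdir p hp q hq
      have hy'' := hps.1 hy'
      have hz'' := hqs.1 hz'
      rw [hcons s hs _ (s.car.add_mem hy'' hz''), hcons s hs _ hy'', hcons s hs _ hz'']
      exact s.addp' y hy'' z hz''
    · intro y hy z hz
      obtain ⟨p, hp, hy'⟩ := (hmemU y).mp hy
      obtain ⟨q, hq, hz'⟩ := (hmemU z).mp hz
      obtain ⟨s, hs, hps, hqs⟩ := hdir p hp q hq
      have hy'' := hps.1 hy'
      have hz'' := hqs.1 hz'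
      rw [hcons s hs _ (s.car.mul_mem hy'' hz''), hcons s hs _ hy'', hcons s hs _ hz'']
      exact s.mulp' y hy'' z hz''
    · intro p hp
      refine ⟨?_, fun y hy => (hcons p hp y hy).symm⟩
      intro y hy
      exact (hmemU y).mpr ⟨p, hp, hy⟩
  obtain ⟨m, hm⟩ := exists_maximal_of_chains_bounded hbdd htrans
  -- maximality implies m.car = ⊤
  have htop : ∀ y : L, y ∈ m.car := by
    by_contra hne
    push_neg at hne
    obtain ⟨x, hx⟩ := hne
    obtain ⟨d', hagree, haddC, hmulC⟩ :=
      derivation_extend_step m.car x m.f m.addp' m.mulp'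
    set Mc := Subfield.closure (↑m.car ∪ {x} : Set L) with hMc
    have hsub : ∀ y ∈ m.car, y ∈ Mc := fun y hy => Subfield.subset_closure (Or.inl hy)
    have hxm : x ∈ Mc := Subfield.subset_closure (Or.inr rfl)
    set new : PartialDer K L δ :=
      ⟨Mc, d', fun a => hsub _ (m.mem' a),
        fun a => (hagree _ (m.mem' a)).trans (m.compat' a),
        haddC, hmulC⟩ with hnew
    have h1 : r m new := ⟨fun y hy => hsub y hy, fun y hy => (hagree y hy).symm⟩
    have h2 : r new m := hm new h1
    exact hx (h2.1 hxm)
  exact ⟨m.f, fun y z => m.addp' y (htop y) z (htop z),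
    fun y z => m.mulp' y (htop y) z (htop z), m.compat'⟩
end
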